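/- Let ‖·‖_{X(0,∞)} and ‖·‖_{S(0,∞)} be rearrangement-invariant function norms, α > 0, L > 0, and suppose there is a constant C₁ such that ‖χ_{(L,∞)}(s) ∫_s^∞ f(r) r^{α−1} dr‖_S ≤ C₁( ‖f‖_X + ‖∫_s^∞ f(r) r^{α−1} dr‖_X ) for every non-increasing f ∈ M₊(0,∞). Then there exists a constant C₂ such that ‖g* χ_{(2L,∞)}‖_S ≤ C₂ ‖g‖_X for every g ∈ M₊(0,∞). -/

import Mathlib

open MeasureTheory Set
open scoped ENNReal NNReal

noncomputable section

/-- The non-increasing rearrangement of `f` with respect to the measure `μ`: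
`f*(s) = inf { t : μ {x | f x > t} ≤ s }`. -/
def rearr {α : Type*} [MeasurableSpace α] (μ : Measure α) (f : α → ℝ≥0∞) (s : ℝ) : ℝ≥0∞ :=
  sInf {t : ℝ≥0∞ | μ {x | t < f x} ≤ ENNReal.ofReal s}
/-- A rearrangement-invariant function norm on `(0,∞)`, acting on nonnegative
(extended-real-valued) measurable functions; properties (P1)-(P6). -/
structure RINorm where
  N : (ℝ → ℝ≥0∞) → ℝ≥0∞
  eq_zero_iff' : ∀ f : ℝ → ℝ≥0∞,
    N f = 0 ↔ ∀ᵐ s ∂(volume.restrict (Set.Ioi (0:ℝ))), f s = 0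
  smul' : ∀ (c : ℝ≥0) (f : ℝ → ℝ≥0∞), N (fun s => (c : ℝ≥0∞) * f s) = (c : ℝ≥0∞) * N f
  add_le' : ∀ f g : ℝ → ℝ≥0∞, N (fun s => f s + g s) ≤ N f + N g
  mono' : ∀ f g : ℝ → ℝ≥0∞, (∀ s ∈ Set.Ioi (0:ℝ), f s ≤ g s) → N f ≤ N g
  sup' : ∀ f : ℕ → ℝ → ℝ≥0∞, (∀ k s, f k s ≤ f (k+1) s) →
    N (fun s => ⨆ k, f k s) = ⨆ k, N (f k)
  chi_finite' : ∀ F : Set ℝ, MeasurableSet F → F ⊆ Set.Ioi 0 → volume F ≠ ⊤ →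
    N (F.indicator 1) ≠ ⊤
  int_le' : ∀ F : Set ℝ, MeasurableSet F → F ⊆ Set.Ioi 0 → volume F ≠ ⊤ →
    ∃ C : ℝ≥0, ∀ f : ℝ → ℝ≥0∞, ∫⁻ s in F, f s ≤ (C : ℝ≥0∞) * N f
  rearr_inv' : ∀ f g : ℝ → ℝ≥0∞,
    (∀ t : ℝ≥0∞, volume {s : ℝ | 0 < s ∧ t < f s} = volume {s : ℝ | 0 < s ∧ t < g s}) →
    N f = N g

/-- The associate norm of a rearrangement-invariant function norm. -/
def RINorm.assoc (X : RINorm) (g : ℝ → ℝ≥0∞) : ℝ≥0∞ :=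
  ⨆ (f : ℝ → ℝ≥0∞) (_ : X.N f ≤ 1), ∫⁻ s in Set.Ioi (0:ℝ), f s * g s

namespace RTB

/-- mult by an `ℝ≥0∞` constant commutes with the norm -/
lemma N_const_mul (X : RINorm) (c : ℝ≥0∞) (f : ℝ → ℝ≥0∞) :
    X.N (fun s => c * f s) = c * X.N f := by
  induction c using ENNReal.recTopCoe with
  | coe c => exact X.smul' c f
  | top =>
    have h1 : (fun s => (⊤:ℝ≥0∞) * f s) = fun s => ⨆ n : ℕ, ((n:ℝ≥0) : ℝ≥0∞) * f s := by
      funext s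
      rw [← ENNReal.iSup_mul]
      congr 1
      simp only [ENNReal.coe_natCast]
      exact ENNReal.iSup_natCast.symm
    have hmono : ∀ (k : ℕ) (s : ℝ), ((k:ℝ≥0) : ℝ≥0∞) * f s ≤ (((k+1:ℕ):ℝ≥0) : ℝ≥0∞) * f s := by
      intro k s
      refine mul_le_mul_left ?_ _
      simp only [ENNReal.coe_natCast]
      exact_mod_cast Nat.le_succ k
    rw [h1, X.sup' _ hmono]
    simp_rw [X.smul']
    rw [← ENNReal.iSup_mul]
    congr 1
    simp only [ENNReal.coe_natCast]
    exact ENNReal.iSup_natCast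

lemma bpow {b : ℕ → ℝ} (hb : ∀ k, b (k+1) = 2 * b k) : ∀ k, b k = 2 ^ k * b 0 := by
  intro k; induction k with
  | zero => simp
  | succ n ih => rw [hb n, ih]; ring

lemma sum_ind_eq (c : ℕ → ℝ≥0∞) (d : ℕ → ℝ) (M : ℕ) {s : ℝ} (hs : 0 < s) :
    (∑ k ∈ Finset.range M, c k * (Ioc (0:ℝ) (d k)).indicator 1 s)
      = ∑ k ∈ (Finset.range M).filter (fun k => s ≤ d k), c k := by
  rw [Finset.sum_filter]
  refine Finset.sum_congr rfl fun k _ => ?_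
  by_cases hk : s ≤ d k
  · rw [if_pos hk, indicator_of_mem (mem_Ioc.mpr ⟨hs, hk⟩), Pi.one_apply, mul_one]
  · rw [if_neg hk, indicator_of_notMem (fun hmem => hk hmem.2), mul_zero]

lemma levelset (c : ℕ → ℝ≥0∞) (M : ℕ) (d : ℕ → ℝ) (hdm : StrictMono d)
    (t : ℝ≥0∞) :
    {s : ℝ | 0 < s ∧ t < ∑ k ∈ Finset.range M, c k * (Ioc (0:ℝ) (d k)).indicator 1 s}
      = if t < ∑ k ∈ Finset.Ico 0 M, c k
          then Ioc (0:ℝ) (d (Nat.findGreatest (fun j => t < ∑ k ∈ Finset.Ico j M, c k) M))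
          else ∅ := by
  classical
  set V : ℕ → ℝ≥0∞ := fun j => ∑ k ∈ Finset.Ico j M, c k with hV
  have hVM : V M = 0 := by simp [hV]
  by_cases h0 : t < V 0
  · rw [if_pos h0]
    set K := Nat.findGreatest (fun j => t < V j) M with hK
    have hPK : t < V K := Nat.findGreatest_spec (P := fun j => t < V j) (Nat.zero_le M) h0
    have hKM : K ≤ M := Nat.findGreatest_le M
    have hKlt : K < M := by
      rcases lt_or_eq_of_le hKM with h | h
      · exact h
      · exfalso; rw [h, hVM] at hPK; exact (not_lt_of_ge zero_le) hPK
    have hnext : ¬ t < V (K + 1) :=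
      Nat.findGreatest_is_greatest (P := fun j => t < V j) (Nat.lt_succ_self K) (by omega)
    ext s
    simp only [mem_setOf_eq, mem_Ioc]
    constructor
    · rintro ⟨hs, ht⟩
      refine ⟨hs, ?_⟩
      by_contra hgt
      push_neg at hgt
      rw [sum_ind_eq c d M hs] at ht
      have hsub : (Finset.range M).filter (fun k => s ≤ d k) ⊆ Finset.Ico (K+1) M := by
        intro k hk
        simp only [Finset.mem_filter, Finset.mem_range] at hk
        rw [Finset.mem_Ico]
        refine ⟨?_, hk.1⟩
        exact hdm.lt_iff_lt.mp (lt_of_lt_of_le hgt hk.2)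
      exact hnext (lt_of_lt_of_le ht (Finset.sum_le_sum_of_subset hsub))
    · rintro ⟨hs, hsd⟩
      refine ⟨hs, ?_⟩
      rw [sum_ind_eq c d M hs]
      refine lt_of_lt_of_le hPK (Finset.sum_le_sum_of_subset ?_)
      intro k hk
      rw [Finset.mem_Ico] at hk
      simp only [Finset.mem_filter, Finset.mem_range]
      exact ⟨hk.2, le_trans hsd (hdm.monotone hk.1)⟩
  · rw [if_neg h0]
    ext s
    simp only [mem_setOf_eq, mem_empty_iff_false, iff_false, not_and]
    intro hs
    rw [sum_ind_eq c d M hs]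
    refine not_lt_of_ge (le_trans (Finset.sum_le_sum_of_subset ?_) (not_lt.mp h0))
    intro k hk
    simp only [Finset.mem_filter, Finset.mem_range] at hk
    rw [Finset.mem_Ico]; omega

end RTB

namespace RTB

lemma union_measure (b : ℕ → ℝ) (hb0 : 0 < b 0) (hb : ∀ k, b (k+1) = 2 * b k)
    (β γ : ℝ) (p q : ℕ → ℝ) (hβ : 0 ≤ β) (hγ : γ ≤ b 1) (hlen : γ - β = b 0)
    (hp : ∀ k, b (k+1) ≤ p k) (hpq : ∀ k, p k ≤ q k) (hq : ∀ k, q k ≤ b (k+2))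
    (hqp : ∀ k, q k - p k = b k) (K : ℕ) :
    volume ((Ioc β γ ∪ ⋃ k, Ioc (p k) (q k)) ∩ Ioc 0 (b (K+1))) = ENNReal.ofReal (b K) := by
  classical
  have bpos : ∀ k, 0 < b k := fun k => by
    rw [bpow hb k]; positivity
  have bmonoS : StrictMono b := strictMono_nat_of_lt_succ fun n => by
    rw [hb n]; linarith [bpos n]
  have bmono : Monotone b := bmonoS.monotone
  rw [union_inter_distrib_right, iUnion_inter]
  have hbase : Ioc β γ ∩ Ioc 0 (b (K+1)) = Ioc β γ := by
    rw [inter_eq_left]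
    intro x hx
    exact ⟨lt_of_le_of_lt hβ hx.1, le_trans hx.2 (le_trans hγ (bmono (by omega)))⟩
  have hpiece : ∀ k, Ioc (p k) (q k) ∩ Ioc 0 (b (K+1)) = if k < K then Ioc (p k) (q k) else ∅ := by
    intro k
    by_cases hk : k < K
    · rw [if_pos hk, inter_eq_left]
      intro x hx
      refine ⟨lt_of_le_of_lt (le_trans (bpos (k+1)).le (hp k)) hx.1,
        le_trans hx.2 (le_trans (hq k) (bmono (by omega)))⟩
    · rw [if_neg hk]
      apply eq_empty_of_forall_notMem
      rintro x ⟨⟨hx1, _⟩, ⟨_, hx4⟩⟩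
      have h1 : b (K+1) ≤ p k := le_trans (bmono (by omega)) (hp k)
      linarith
  rw [hbase, iUnion_congr hpiece]
  have hmeas : ∀ k : ℕ, MeasurableSet (if k < K then Ioc (p k) (q k) else (∅ : Set ℝ)) := by
    intro k; split_ifs
    exacts [measurableSet_Ioc, MeasurableSet.empty]
  have hdisj1 : Disjoint (Ioc β γ) (⋃ k, (if k < K then Ioc (p k) (q k) else ∅)) := by
    rw [disjoint_iUnion_right]
    intro k
    split_ifs with hk
    · rw [Set.disjoint_left]
      rintro x ⟨_, hx2⟩ ⟨hx3, _⟩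
      have : γ ≤ p k := le_trans hγ (le_trans (bmono (by omega : 1 ≤ k+1)) (hp k))
      linarith
    · exact disjoint_empty _
  rw [measure_union hdisj1 (MeasurableSet.iUnion hmeas)]
  have key : ∀ i j : ℕ, i < j → Disjoint (Ioc (p i) (q i)) (Ioc (p j) (q j)) := by
    intro i j hij
    rw [Set.disjoint_left]
    rintro x ⟨_, hx2⟩ ⟨hx3, _⟩
    have : q i ≤ p j := le_trans (hq i) (le_trans (bmono (by omega : i + 2 ≤ j + 1)) (hp j))
    linarith
  have hdisj2 : Pairwise (Function.onFun Disjoint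
      (fun k => if k < K then Ioc (p k) (q k) else (∅ : Set ℝ))) := by
    intro i j hij
    unfold Function.onFun
    dsimp only
    rcases lt_or_gt_of_ne hij with h | h
    · split_ifs
      exacts [key i j h, Set.disjoint_empty _, Set.empty_disjoint _, Set.empty_disjoint _]
    · split_ifs
      exacts [(key j i h).symm, Set.disjoint_empty _, Set.empty_disjoint _, Set.empty_disjoint _]
  rw [measure_iUnion hdisj2 hmeas]
  have hterm : ∀ k : ℕ, volume (if k < K then Ioc (p k) (q k) else (∅: Set ℝ))
      = if k < K then ENNReal.ofReal (b k) else 0 := by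
    intro k; split_ifs with hk
    · rw [Real.volume_Ioc, hqp k]
    · simp
  simp_rw [hterm]
  rw [tsum_eq_sum (s := Finset.range K) (by
    intro k hk
    rw [if_neg]
    simpa using hk)]
  have hss : ∑ k ∈ Finset.range K, (if k < K then ENNReal.ofReal (b k) else 0)
      = ∑ k ∈ Finset.range K, ENNReal.ofReal (b k) :=
    Finset.sum_congr rfl (fun k hk => by rw [if_pos (Finset.mem_range.mp hk)])
  rw [hss, ← ENNReal.ofReal_sum_of_nonneg (fun k _ => (bpos k).le), Real.volume_Ioc, hlen,
    ← ENNReal.ofReal_add hb0.le (Finset.sum_nonneg fun k _ => (bpos k).le)]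
  congr 1
  have hsum : ∑ k ∈ Finset.range K, b k = (2^K - 1) * b 0 := by
    rw [Finset.sum_congr rfl (fun k (_ : k ∈ Finset.range K) => bpow hb k), ← Finset.sum_mul,
      geom_sum_eq (by norm_num : (2:ℝ) ≠ 1) K]
    ring
  rw [hsum, bpow hb K]; ring

end RTB

namespace RTB

lemma N_double (X : RINorm) (b : ℕ → ℝ) (hb0 : 0 < b 0)
    (hb : ∀ k, b (k+1) = 2 * b k) (c : ℕ → ℝ≥0∞) (M : ℕ) :
    X.N (fun s => ∑ k ∈ Finset.range M, c k * (Ioc (0:ℝ) (b (k+1))).indicator 1 s)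
      ≤ 2 * X.N (fun s => ∑ k ∈ Finset.range M, c k * (Ioc (0:ℝ) (b k)).indicator 1 s) := by
  classical
  have bpos : ∀ k, 0 < b k := fun k => by rw [bpow hb k]; positivity
  have bmonoS : StrictMono b := strictMono_nat_of_lt_succ fun n => by
    rw [hb n]; linarith [bpos n]
  have bmono : Monotone b := bmonoS.monotone
  set Φ : ℝ → ℝ≥0∞ := fun s => ∑ k ∈ Finset.range M, c k * (Ioc (0:ℝ) (b (k+1))).indicator 1 s
    with hΦ
  set Ψ : ℝ → ℝ≥0∞ := fun s => ∑ k ∈ Finset.range M, c k * (Ioc (0:ℝ) (b k)).indicator 1 s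
    with hΨ
  set A₀ : Set ℝ := Ioc 0 (b 0) ∪ ⋃ k, Ioc (b (k+1)) (b (k+1) + b k) with hA₀
  set A₁ : Set ℝ := Ioc (b 0) (b 1) ∪ ⋃ k, Ioc (b (k+1) + b k) (b (k+2)) with hA₁
  have hcover : ∀ s : ℝ, 0 < s → s ∈ A₀ ∪ A₁ := by
    intro s hs
    by_cases h1 : s ≤ b 1
    · by_cases h0 : s ≤ b 0
      · exact Or.inl (Or.inl ⟨hs, h0⟩)
      · exact Or.inr (Or.inl ⟨lt_of_not_ge h0, h1⟩)
    · push_neg at h1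
      have hex : ∃ m, s ≤ b m := by
        obtain ⟨n, hn⟩ := pow_unbounded_of_one_lt (s / b 0) (by norm_num : (1:ℝ) < 2)
        refine ⟨n, ?_⟩
        rw [bpow hb n]
        rw [div_lt_iff₀ hb0] at hn
        linarith
      have hms : s ≤ b (Nat.find hex) := Nat.find_spec hex
      have hm2 : 2 ≤ Nat.find hex := by
        by_contra hc
        push_neg at hc
        have hle : b (Nat.find hex) ≤ b 1 := bmono (by omega)
        linarith
      obtain ⟨k, hk⟩ : ∃ k, Nat.find hex = k + 2 := ⟨Nat.find hex - 2, by omega⟩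
      have hlow : b (k+1) < s := by
        have hmin := Nat.find_min hex (show Nat.find hex - 1 < Nat.find hex by omega)
        push_neg at hmin
        rwa [show Nat.find hex - 1 = k+1 by omega] at hmin
      have hupp : s ≤ b (k+2) := by rwa [hk] at hms
      by_cases hmid : s ≤ b (k+1) + b k
      · exact Or.inl (Or.inr (mem_iUnion.mpr ⟨k, hlow, hmid⟩))
      · exact Or.inr (Or.inr (mem_iUnion.mpr ⟨k, lt_of_not_ge hmid, hupp⟩))
  have hptwise : ∀ s ∈ Ioi (0:ℝ), Φ s ≤ A₀.indicator Φ s + A₁.indicator Φ s := by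
    intro s hs
    rcases hcover s hs with h | h
    · rw [indicator_of_mem h]; exact le_self_add
    · rw [indicator_of_mem h]; exact le_add_self
  refine le_trans (X.mono' _ _ hptwise) (le_trans (X.add_le' _ _) ?_)
  have hmain : ∀ (A : Set ℝ),
      (∀ K, volume (A ∩ Ioc 0 (b (K+1))) = ENNReal.ofReal (b K)) →
      X.N (A.indicator Φ) = X.N Ψ := by
    intro A hAm
    apply X.rearr_inv'
    intro t
    have hsetA : {s : ℝ | 0 < s ∧ t < A.indicator Φ s} = A ∩ {s : ℝ | 0 < s ∧ t < Φ s} := by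
      ext s
      constructor
      · rintro ⟨hs, ht⟩
        by_cases hmem : s ∈ A
        · exact ⟨hmem, hs, by rwa [indicator_of_mem hmem] at ht⟩
        · rw [indicator_of_notMem hmem] at ht
          exact absurd ht (by simp)
      · rintro ⟨hmem, hs, ht⟩
        exact ⟨hs, by rwa [indicator_of_mem hmem]⟩
    have hlev1 := levelset c M (fun k => b (k+1)) (fun i j hij => bmonoS (by omega)) t
    have hlev0 := levelset c M b bmonoS t
    rw [hsetA, hΦ, hΨ]
    rw [hlev1, hlev0]
    split_ifs with hcond
    · rw [hAm _, Real.volume_Ioc, sub_zero]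
    · rw [inter_empty]
  have hA₀m : ∀ K, volume (A₀ ∩ Ioc 0 (b (K+1))) = ENNReal.ofReal (b K) := by
    intro K
    refine union_measure b hb0 hb 0 (b 0) (fun k => b (k+1)) (fun k => b (k+1) + b k)
      le_rfl (bmono (by omega)) (by ring) (fun k => ?_) (fun k => ?_) (fun k => ?_)
      (fun k => ?_) K
    · show b (k+1) ≤ b (k+1); exact le_rfl
    · show b (k+1) ≤ b (k+1) + b k; linarith [bpos k]
    · show b (k+1) + b k ≤ b (k+2); rw [hb (k+1)]; linarith [bmono (Nat.le_succ k)]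
    · show b (k+1) + b k - b (k+1) = b k; ring
  have hA₁m : ∀ K, volume (A₁ ∩ Ioc 0 (b (K+1))) = ENNReal.ofReal (b K) := by
    intro K
    refine union_measure b hb0 hb (b 0) (b 1) (fun k => b (k+1) + b k) (fun k => b (k+2))
      hb0.le le_rfl (by rw [hb 0]; ring) (fun k => ?_) (fun k => ?_) (fun k => ?_)
      (fun k => ?_) K
    · show b (k+1) ≤ b (k+1) + b k; linarith [bpos k]
    · show b (k+1) + b k ≤ b (k+2); rw [hb (k+1)]; linarith [bmono (Nat.le_succ k)]
    · show b (k+2) ≤ b (k+2); exact le_rfl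
    · show b (k+2) - (b (k+1) + b k) = b k; rw [hb (k+1), hb k]; ring
  rw [hmain A₀ hA₀m, hmain A₁ hA₁m, two_mul]

lemma N_quadruple (X : RINorm) (b : ℕ → ℝ) (hb0 : 0 < b 0)
    (hb : ∀ k, b (k+1) = 2 * b k) (c : ℕ → ℝ≥0∞) (M : ℕ) :
    X.N (fun s => ∑ k ∈ Finset.range M, c k * (Ioc (0:ℝ) (b (k+2))).indicator 1 s)
      ≤ 4 * X.N (fun s => ∑ k ∈ Finset.range M, c k * (Ioc (0:ℝ) (b k)).indicator 1 s) := by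
  have hb1 : (0:ℝ) < b 1 := by rw [hb 0]; linarith
  have h1 := N_double X (fun k => b (k+1)) hb1 (fun k => hb (k+1)) c M
  have h2 := N_double X b hb0 hb c M
  calc X.N (fun s => ∑ k ∈ Finset.range M, c k * (Ioc (0:ℝ) (b (k+2))).indicator 1 s)
      ≤ 2 * X.N (fun s => ∑ k ∈ Finset.range M, c k * (Ioc (0:ℝ) (b (k+1))).indicator 1 s) := h1
    _ ≤ 2 * (2 * X.N (fun s => ∑ k ∈ Finset.range M, c k * (Ioc (0:ℝ) (b k)).indicator 1 s)) :=
        mul_le_mul_right h2 2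
    _ = 4 * X.N (fun s => ∑ k ∈ Finset.range M, c k * (Ioc (0:ℝ) (b k)).indicator 1 s) := by
        rw [← mul_assoc]; norm_num

end RTB

namespace RTB

lemma rearr_antitone (g : ℝ → ℝ≥0∞) : Antitone (rearr (volume.restrict (Ioi (0:ℝ))) g) := by
  intro s1 s2 h12
  refine sInf_le_sInf ?_
  intro t ht
  exact le_trans ht (ENNReal.ofReal_le_ofReal h12)

lemma rearr_dist (g : ℝ → ℝ≥0∞) (t : ℝ≥0∞) :
    volume {s : ℝ | 0 < s ∧ t < rearr (volume.restrict (Ioi (0:ℝ))) g s}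
      = volume {s : ℝ | 0 < s ∧ t < g s} := by
  set μ := volume.restrict (Ioi (0:ℝ)) with hμ
  set d : ℝ≥0∞ := μ {x | t < g x} with hd
  have hRHS : volume {s : ℝ | 0 < s ∧ t < g s} = d := by
    rw [hd, hμ, Measure.restrict_apply' measurableSet_Ioi]
    congr 1
    ext x
    simp only [mem_setOf_eq, mem_inter_iff, mem_Ioi]
    tauto
  rcases eq_or_ne t ⊤ with rfl | htop
  · rw [hRHS]
    have h1 : {s : ℝ | 0 < s ∧ ⊤ < rearr μ g s} = ∅ := by
      apply eq_empty_of_forall_notMem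
      rintro x ⟨_, hx⟩
      exact not_top_lt hx
    have hempty : {x : ℝ | (⊤:ℝ≥0∞) < g x} = ∅ := by
      apply eq_empty_of_forall_notMem
      intro x hx
      simp only [mem_setOf_eq] at hx
      exact not_top_lt hx
    have h2 : d = 0 := by
      rw [hd, hempty]
      exact measure_empty
    rw [h1, h2]
    exact measure_empty
  · have hset : {s : ℝ | 0 < s ∧ t < rearr μ g s} = {s : ℝ | 0 < s ∧ ENNReal.ofReal s < d} := by
      ext s
      simp only [mem_setOf_eq]
      constructor
      · rintro ⟨hs, hlt⟩
        refine ⟨hs, ?_⟩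
        by_contra hle
        push_neg at hle
        exact absurd (sInf_le (show d ≤ ENNReal.ofReal s from hle) : rearr μ g s ≤ t) (not_le.2 hlt)
      · rintro ⟨hs, hlt⟩
        refine ⟨hs, ?_⟩
        by_contra hle
        push_neg at hle
        have key : ∀ t' : ℝ≥0∞, t < t' → μ {x | t' < g x} ≤ ENNReal.ofReal s := by
          intro t' ht'
          obtain ⟨x, hxA, hxlt⟩ := sInf_lt_iff.1 (lt_of_le_of_lt hle ht')
          exact le_trans (measure_mono (fun y hy => lt_trans hxlt hy)) hxA
        have hun : {x : ℝ | t < g x} = ⋃ n : ℕ, {x : ℝ | t + (n:ℝ≥0∞)⁻¹ < g x} := by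
          ext x
          simp only [mem_iUnion, mem_setOf_eq]
          constructor
          · intro hx
            obtain ⟨n, hn⟩ := ENNReal.exists_inv_nat_lt (tsub_pos_of_lt hx).ne'
            refine ⟨n, ?_⟩
            calc t + (n:ℝ≥0∞)⁻¹ < t + (g x - t) := ENNReal.add_lt_add_left htop hn
              _ = g x := add_tsub_cancel_of_le hx.le
          · rintro ⟨n, hn⟩
            exact lt_of_le_of_lt le_self_add hn
        have hmono : Monotone (fun n : ℕ => {x : ℝ | t + (n:ℝ≥0∞)⁻¹ < g x}) := by
          intro m n hmn x hx
          refine lt_of_le_of_lt (add_le_add le_rfl ?_) (show t + (m:ℝ≥0∞)⁻¹ < g x from hx)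
          exact ENNReal.inv_le_inv.2 (by exact_mod_cast hmn)
        have hcontra : d ≤ ENNReal.ofReal s := by
          rw [hd, hun, hmono.measure_iUnion]
          refine iSup_le fun n => ?_
          rcases Nat.eq_zero_or_pos n with rfl | hn
          · have : {x : ℝ | t + ((0:ℕ):ℝ≥0∞)⁻¹ < g x} = ∅ := by
              apply eq_empty_of_forall_notMem
              intro x hx
              simp only [Nat.cast_zero, ENNReal.inv_zero, mem_setOf_eq] at hx
              exact (not_top_lt (lt_of_le_of_lt le_add_self hx : (⊤:ℝ≥0∞) < g x))
            rw [this]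
            simp
          · refine key _ (ENNReal.lt_add_right htop ?_)
            simp only [ne_eq, ENNReal.inv_eq_zero]
            exact ENNReal.natCast_ne_top n
        exact absurd hlt (not_lt.2 hcontra)
    rw [hset, hRHS]
    rcases eq_or_ne d ⊤ with hdt | hdt
    · rw [hdt]
      have : {s : ℝ | 0 < s ∧ ENNReal.ofReal s < ⊤} = Ioi 0 := by
        ext s
        simp [ENNReal.ofReal_lt_top]
      rw [this, Real.volume_Ioi]
    · have : {s : ℝ | 0 < s ∧ ENNReal.ofReal s < d} = Ioo 0 d.toReal := by
        ext s
        simp only [mem_setOf_eq, mem_Ioo]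
        constructor
        · rintro ⟨hs, h2⟩
          exact ⟨hs, (ENNReal.ofReal_lt_iff_lt_toReal hs.le hdt).1 h2⟩
        · rintro ⟨hs, h2⟩
          exact ⟨hs, (ENNReal.ofReal_lt_iff_lt_toReal hs.le hdt).2 h2⟩
      rw [this, Real.volume_Ioo, sub_zero, ENNReal.ofReal_toReal hdt]

end RTB

namespace RTB

lemma lint_Ioc (α : ℝ) (hα : 0 < α) {s b : ℝ} (hs : 0 < s) :
    (∫⁻ r in Ioi s, (Ioc (0:ℝ) b).indicator 1 r * ENNReal.ofReal (r ^ (α - 1)))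
      = if s ≤ b then ENNReal.ofReal ((b ^ α - s ^ α) / α) else 0 := by
  have h1 : ∀ r : ℝ, (Ioc (0:ℝ) b).indicator 1 r * ENNReal.ofReal (r ^ (α-1))
      = (Ioc (0:ℝ) b).indicator (fun x => ENNReal.ofReal (x ^ (α-1))) r := by
    intro r
    by_cases hr : r ∈ Ioc (0:ℝ) b
    · rw [indicator_of_mem hr, indicator_of_mem hr, Pi.one_apply, one_mul]
    · rw [indicator_of_notMem hr, indicator_of_notMem hr, zero_mul]
  simp_rw [h1]
  rw [setLIntegral_indicator measurableSet_Ioc]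
  have h2 : Ioc (0:ℝ) b ∩ Ioi s = Ioc s b := by
    ext r
    simp only [mem_inter_iff, mem_Ioc, mem_Ioi]
    constructor
    · rintro ⟨⟨_, h2⟩, h3⟩
      exact ⟨h3, h2⟩
    · rintro ⟨h3, h2⟩
      exact ⟨⟨lt_trans hs h3, h2⟩, h3⟩
  rw [h2]
  by_cases hsb : s ≤ b
  · rw [if_pos hsb]
    have hInt : IntegrableOn (fun r : ℝ => r ^ (α - 1)) (Ioc s b) := by
      refine (ContinuousOn.integrableOn_compact isCompact_Icc ?_).mono_set Ioc_subset_Icc_self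
      intro x hx
      exact (Real.continuousAt_rpow_const x _
        (Or.inl (ne_of_gt (lt_of_lt_of_le hs hx.1)))).continuousWithinAt
    rw [← ofReal_integral_eq_lintegral_ofReal hInt ?_]
    · congr 1
      rw [← intervalIntegral.integral_of_le hsb,
        integral_rpow (Or.inl (by linarith : (-1:ℝ) < α - 1)), sub_add_cancel]
    · filter_upwards [self_mem_ae_restrict measurableSet_Ioc] with r hr
      exact Real.rpow_nonneg (le_of_lt (lt_trans hs hr.1)) _
  · rw [if_neg hsb, Set.Ioc_eq_empty (fun hlt => hsb hlt.le), Measure.restrict_empty,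
      lintegral_zero_measure]

end RTB

open RTB

/-- **Proposition P:1.** If
`‖χ_{(L,∞)}(s) ∫_s^∞ f(r) r^{α−1} dr‖_S ≤ C₁ (‖f‖_X + ‖∫_s^∞ f(r) r^{α−1} dr‖_X)`
for every non-increasing `f ∈ M₊(0,∞)`, then there is `C₂` with
`‖g* χ_{(2L,∞)}‖_S ≤ C₂ ‖g‖_X` for every `g ∈ M₊(0,∞)`. -/
theorem rearrangement_tail_bound_of_hardy_type (X S : RINorm) (α L : ℝ)
    (hα : 0 < α) (hL : 0 < L) (C₁ : ℝ≥0)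
    (h : ∀ f : ℝ → ℝ≥0∞, AntitoneOn f (Set.Ioi 0) →
      S.N ((Set.Ioi L).indicator
          (fun s => ∫⁻ r in Set.Ioi s, f r * ENNReal.ofReal (r ^ (α - 1)))) ≤
        (C₁ : ℝ≥0∞) *
          (X.N f + X.N (fun s => ∫⁻ r in Set.Ioi s, f r * ENNReal.ofReal (r ^ (α - 1))))) :
    ∃ C₂ : ℝ≥0, ∀ g : ℝ → ℝ≥0∞,
      S.N ((Set.Ioi (2 * L)).indicator
          (rearr (volume.restrict (Set.Ioi (0:ℝ))) g)) ≤
        (C₂ : ℝ≥0∞) * X.N g := by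
  classical
  obtain ⟨a, ha0, ha_succ⟩ : ∃ a : ℕ → ℝ, a 0 = 2*L ∧ ∀ k, a (k+1) = 2*a k :=
    ⟨fun k => 2^(k+1)*L, by norm_num, fun k => by ring⟩
  have ha_pos : ∀ k, 0 < a k := fun k => by
    rw [bpow ha_succ k, ha0]; positivity
  have ha_monoS : StrictMono a := strictMono_nat_of_lt_succ fun n => by
    rw [ha_succ n]; linarith [ha_pos n]
  have ha_mono := ha_monoS.monotone
  -- constants
  have h42 : (2:ℝ) ^ α < 4 ^ α := Real.rpow_lt_rpow (by norm_num) (by norm_num) hα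
  set κ : ℝ≥0∞ := ENNReal.ofReal (((4:ℝ) ^ α - 2 ^ α) / α) with hκ
  have hκ0 : κ ≠ 0 := by
    rw [hκ]
    simp only [ne_eq, ENNReal.ofReal_eq_zero, not_le]
    exact div_pos (by linarith) hα
  have hκtop : κ ≠ ⊤ := ENNReal.ofReal_ne_top
  set r2 : ℝ := (2:ℝ) ^ (-α) with hr2
  have hr2pos : 0 < r2 := Real.rpow_pos_of_pos (by norm_num) _
  have hr2lt : r2 < 1 := Real.rpow_lt_one_of_one_lt_of_neg (by norm_num) (by linarith)
  set γ : ℝ≥0∞ := ENNReal.ofReal ((2*L) ^ (-α) * (1 - r2)⁻¹) with hγ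
  set cF : ℝ≥0∞ := ENNReal.ofReal ((4:ℝ) ^ α / α) with hcF
  set D : ℝ≥0∞ := 4 * γ + cF * 4 with hD
  set Ctot : ℝ≥0∞ := κ⁻¹ * ((C₁:ℝ≥0∞) * D) with hCtot
  have hCtop : Ctot ≠ ⊤ := by
    rw [hCtot]
    refine ENNReal.mul_ne_top (ENNReal.inv_ne_top.mpr hκ0)
      (ENNReal.mul_ne_top ENNReal.coe_ne_top ?_)
    rw [hD]
    refine ENNReal.add_ne_top.mpr ⟨ENNReal.mul_ne_top ?_ ENNReal.ofReal_ne_top,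
      ENNReal.mul_ne_top ENNReal.ofReal_ne_top ?_⟩
    · exact ENNReal.ofNat_ne_top
    · exact ENNReal.ofNat_ne_top
  refine ⟨Ctot.toNNReal, ?_⟩
  intro g
  set u : ℝ → ℝ≥0∞ := rearr (volume.restrict (Ioi (0:ℝ))) g with hu
  have hu_anti : Antitone u := rearr_antitone g
  have hXu : X.N u = X.N g := X.rearr_inv' u g (fun t => rearr_dist g t)
  have hgrow : ∀ s : ℝ, ∃ T : ℕ, s ≤ a T := by
    intro s
    obtain ⟨n, hn⟩ := pow_unbounded_of_one_lt (s / L) (by norm_num : (1:ℝ) < 2)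
    refine ⟨n, ?_⟩
    rw [div_lt_iff₀ hL] at hn
    rw [bpow ha_succ n, ha0]
    nlinarith [pow_pos (by norm_num : (0:ℝ) < 2) n, hL]
  set G : ℕ → ℝ → ℝ≥0∞ :=
    fun T => (Ioi (2*L)).indicator (fun s => if s ≤ a T then u s else 0) with hG
  have hGdef : ∀ T, G T = (Ioi (2*L)).indicator (fun s => if s ≤ a T then u s else 0) :=
    fun T => rfl
  have hGmono : ∀ (T : ℕ) (s : ℝ), G T s ≤ G (T+1) s := by
    intro T s
    rw [hGdef, hGdef]
    by_cases hs : s ∈ Ioi (2*L)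
    · rw [indicator_of_mem hs, indicator_of_mem hs]
      split_ifs with h1 h2
      · exact le_rfl
      · exact absurd (le_trans h1 (ha_mono (Nat.le_succ T))) h2
      · exact zero_le
      · exact le_rfl
    · rw [indicator_of_notMem hs, indicator_of_notMem hs]
  have hGsup : ((Ioi (2*L)).indicator u) = fun s => ⨆ T, G T s := by
    funext s
    by_cases hs : s ∈ Ioi (2*L)
    · rw [indicator_of_mem hs]
      have h1 : ∀ T : ℕ, G T s = (if s ≤ a T then u s else 0) := by
        intro T; rw [hGdef]; exact indicator_of_mem hs _
      rw [iSup_congr h1]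
      apply le_antisymm
      · obtain ⟨T0, hT0⟩ := hgrow s
        exact le_iSup_of_le T0 (le_of_eq (if_pos hT0).symm)
      · refine iSup_le fun T => ?_
        split_ifs
        · exact le_rfl
        · exact zero_le
    · rw [indicator_of_notMem hs]
      have h1 : ∀ T : ℕ, G T s = 0 := by
        intro T; rw [hGdef]; exact indicator_of_notMem hs _
      simp [h1]
  -- the per-truncation bound
  have main : ∀ T : ℕ, S.N (G T) ≤ Ctot * X.N u := by
    intro T
    set U : ℕ → ℝ≥0∞ := fun k => if k ≤ T then u (a k) else 0 with hU
    have hUanti : ∀ {i j : ℕ}, i ≤ j → U j ≤ U i := by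
      intro i j hij
      simp only [hU]
      by_cases hj : j ≤ T
      · rw [if_pos hj, if_pos (le_trans hij hj)]
        exact hu_anti (ha_mono hij)
      · rw [if_neg hj]; exact zero_le
    set cc : ℕ → ℝ≥0∞ := fun k => U k - U (k+1) with hcc
    have tele : ∀ n j, j + n = T + 1 → ∑ k ∈ Finset.Ico j (j+n), cc k = U j := by
      intro n
      induction n with
      | zero =>
        intro j hj
        have hjeq : j = T + 1 := by omega
        subst hjeq
        simp only [Nat.add_zero, Finset.Ico_self, Finset.sum_empty, hU]
        rw [if_neg (by omega)]
      | succ n ih =>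
        intro j hj
        rw [Finset.sum_eq_sum_Ico_succ_bot (by omega : j < j + (n+1))]
        rw [show j + (n+1) = (j+1) + n by omega, ih (j+1) (by omega)]
        exact tsub_add_cancel_of_le (hUanti (Nat.le_succ j))
    have teleIco : ∀ j, j ≤ T+1 → ∑ k ∈ Finset.Ico j (T+1), cc k = U j := by
      intro j hj
      have := tele (T+1-j) j (by omega)
      rwa [show j + (T+1-j) = T+1 by omega] at this
    set e : ℕ → ℝ≥0∞ := fun k => cc k * ENNReal.ofReal ((a k) ^ (-α)) with he
    set f : ℝ → ℝ≥0∞ :=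
      fun r => ∑ k ∈ Finset.range (T+1), e k * (Ioc (0:ℝ) (a (k+2))).indicator 1 r with hf
    have hf_anti : AntitoneOn f (Ioi (0:ℝ)) := by
      intro r1 h1 ρ2 h2 h12
      refine Finset.sum_le_sum fun k _ => ?_
      refine mul_le_mul_right ?_ _
      by_cases hρ2 : ρ2 ∈ Ioc (0:ℝ) (a (k+2))
      · rw [indicator_of_mem hρ2, indicator_of_mem (mem_Ioc.mpr ⟨h1, le_trans h12 hρ2.2⟩)]
        exact le_rfl
      · rw [indicator_of_notMem hρ2]; exact zero_le
    set F : ℝ → ℝ≥0∞ := fun s => ∫⁻ r in Ioi s, f r * ENNReal.ofReal (r ^ (α-1)) with hF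
    have hmw : Measurable fun r : ℝ => ENNReal.ofReal (r ^ (α-1)) :=
      ENNReal.measurable_ofReal.comp (measurable_id.pow_const _)
    have hmind : ∀ bb : ℝ,
        Measurable fun r : ℝ => (Ioc (0:ℝ) bb).indicator 1 r * ENNReal.ofReal (r ^ (α-1)) :=
      fun bb => (measurable_one.indicator measurableSet_Ioc).mul hmw
    have hFeq : ∀ s : ℝ, 0 < s → F s = ∑ k ∈ Finset.range (T+1),
        e k * (if s ≤ a (k+2) then ENNReal.ofReal (((a (k+2)) ^ α - s ^ α) / α) else 0) := by
      intro s hs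
      rw [hF]
      have hrw : ∀ r : ℝ, f r * ENNReal.ofReal (r ^ (α-1))
          = ∑ k ∈ Finset.range (T+1),
              e k * ((Ioc (0:ℝ) (a (k+2))).indicator 1 r * ENNReal.ofReal (r ^ (α-1))) := by
        intro r
        rw [hf, Finset.sum_mul]
        exact Finset.sum_congr rfl fun k _ => (mul_assoc _ _ _)
      simp_rw [hrw]
      rw [lintegral_finset_sum _ (fun k _ => (hmind (a (k+2))).const_mul (e k))]
      refine Finset.sum_congr rfl fun k _ => ?_
      rw [lintegral_const_mul (e k) (hmind (a (k+2))), lint_Ioc α hα hs]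
    -- lower bound for F
    have hlow : ∀ s : ℝ, 2*L < s → κ * (if s ≤ a T then u s else 0) ≤ F s := by
      intro s hs2
      by_cases hsT : s ≤ a T
      case neg => rw [if_neg hsT, mul_zero]; exact zero_le
      rw [if_pos hsT]
      have hs0 : 0 < s := lt_trans (by positivity) hs2
      have hex : ∃ m : ℕ, s ≤ a m := ⟨T, hsT⟩
      have hm_spec : s ≤ a (Nat.find hex) := Nat.find_spec hex
      have hm0 : Nat.find hex ≠ 0 := by
        intro h0
        rw [h0, ha0] at hm_spec
        linarith
      obtain ⟨j, hj⟩ : ∃ j, Nat.find hex = j + 1 := ⟨Nat.find hex - 1, by omega⟩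
      have hja : a j < s := by
        have hmin := Nat.find_min hex (show j < Nat.find hex by omega)
        push_neg at hmin
        exact hmin
      have hjT : j < T := ha_monoS.lt_iff_lt.mp (lt_of_lt_of_le hja hsT)
      have hsj1 : s ≤ a (j+1) := by rw [← hj]; exact hm_spec
      rw [hFeq s hs0]
      have step1 : κ * u s ≤ κ * U j := by
        refine mul_le_mul_right ?_ _
        simp only [hU]
        rw [if_pos (le_of_lt hjT)]
        exact hu_anti hja.le
      refine le_trans step1 ?_
      have step2 : κ * U j = ∑ k ∈ Finset.Ico j (T+1), κ * cc k := by
        rw [← Finset.mul_sum, teleIco j (by omega)]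
      rw [step2]
      refine le_trans (Finset.sum_le_sum ?_) (Finset.sum_le_sum_of_subset ?_)
      · intro k hk
        rw [Finset.mem_Ico] at hk
        have hsk1 : s ≤ a (k+1) := le_trans hsj1 (ha_mono (by omega))
        have hsk2 : s ≤ a (k+2) := le_trans hsk1 (ha_mono (by omega))
        rw [if_pos hsk2, he]
        rw [mul_comm κ (cc k), mul_assoc,
          ← ENNReal.ofReal_mul (Real.rpow_nonneg (ha_pos k).le _)]
        refine mul_le_mul_right (ENNReal.ofReal_le_ofReal ?_) _
        have hak : (0:ℝ) < a k := ha_pos k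
        have hpow : (0:ℝ) < (a k) ^ α := Real.rpow_pos_of_pos hak α
        have e1 : (a (k+2)) ^ α = 4 ^ α * (a k) ^ α := by
          rw [show a (k+2) = 4 * a k by rw [ha_succ (k+1), ha_succ k]; ring,
            Real.mul_rpow (by norm_num) hak.le]
        have e2 : s ^ α ≤ 2 ^ α * (a k) ^ α := by
          rw [← Real.mul_rpow (by norm_num) hak.le, ← ha_succ k]
          exact Real.rpow_le_rpow hs0.le hsk1 hα.le
        have e3 : (a k) ^ (-α) = ((a k) ^ α)⁻¹ := Real.rpow_neg hak.le α
        rw [e3]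
        have hclaim : (4:ℝ)^α - 2^α ≤ ((a k)^α)⁻¹ * ((a (k+2))^α - s^α) := by
          rw [e1]
          have hc1 : ((a k)^α)⁻¹ * (4^α * (a k)^α - 2^α * (a k)^α) = 4^α - 2^α := by
            field_simp
          have hc2 : 4^α * (a k)^α - 2^α * (a k)^α ≤ 4^α * (a k)^α - s^α := by linarith
          calc (4:ℝ)^α - 2^α = ((a k)^α)⁻¹ * (4^α * (a k)^α - 2^α * (a k)^α) := hc1.symm
            _ ≤ ((a k)^α)⁻¹ * (4^α * (a k)^α - s^α) :=
                mul_le_mul_of_nonneg_left hc2 (inv_nonneg.mpr hpow.le)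
        calc ((4:ℝ)^α - 2^α)/α ≤ (((a k)^α)⁻¹ * ((a (k+2))^α - s^α))/α :=
              (div_le_div_iff_of_pos_right hα).mpr hclaim
          _ = ((a k)^α)⁻¹ * (((a (k+2))^α - s^α)/α) := by ring
      · intro k hk
        simp only [Finset.mem_Ico] at hk
        simp only [Finset.mem_range]
        omega
    -- upper bounds
    have hccu : ∀ (k : ℕ) (s : ℝ), s ≤ a k → cc k ≤ u s := by
      intro k s hsk
      have h1 : cc k ≤ U k := tsub_le_self
      have h2 : U k ≤ u (a k) := by
        simp only [hU]
        split_ifs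
        · exact le_rfl
        · exact zero_le
      exact le_trans (le_trans h1 h2) (hu_anti hsk)
    have hΨu : ∀ s ∈ Ioi (0:ℝ),
        (∑ k ∈ Finset.range (T+1), cc k * (Ioc (0:ℝ) (a k)).indicator 1 s) ≤ u s := by
      intro s hs
      rw [sum_ind_eq cc a (T+1) hs]
      have hex : ∃ m : ℕ, s ≤ a m := hgrow s
      have hspec : s ≤ a (Nat.find hex) := Nat.find_spec hex
      by_cases hjT : Nat.find hex ≤ T
      · have hfil : (Finset.range (T+1)).filter (fun k => s ≤ a k)
            = Finset.Ico (Nat.find hex) (T+1) := by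
          ext k
          simp only [Finset.mem_filter, Finset.mem_range, Finset.mem_Ico]
          constructor
          · rintro ⟨hk1, hk2⟩
            exact ⟨Nat.find_min' hex hk2, hk1⟩
          · rintro ⟨hk1, hk2⟩
            exact ⟨hk2, le_trans hspec (ha_mono hk1)⟩
        rw [hfil, teleIco _ (by omega)]
        simp only [hU]
        rw [if_pos hjT]
        exact hu_anti hspec
      · have hfil : (Finset.range (T+1)).filter (fun k => s ≤ a k) = ∅ := by
          apply Finset.eq_empty_of_forall_notMem
          intro k hk
          simp only [Finset.mem_filter, Finset.mem_range] at hk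
          have : Nat.find hex ≤ k := Nat.find_min' hex hk.2
          omega
        rw [hfil, Finset.sum_empty]
        exact zero_le
    have hXf : X.N f ≤ 4 * (γ * X.N u) := by
      refine le_trans (N_quadruple X a (by rw [ha0]; positivity) ha_succ e (T+1)) ?_
      refine mul_le_mul_right ?_ 4
      refine le_trans (X.mono' _ (fun s => γ * u s) ?_) (le_of_eq (N_const_mul X γ u))
      intro s hs
      rw [sum_ind_eq e a (T+1) hs]
      have hterm : ∀ k ∈ (Finset.range (T+1)).filter (fun k => s ≤ a k),
          e k ≤ ENNReal.ofReal ((a k) ^ (-α)) * u s := by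
        intro k hk
        simp only [Finset.mem_filter, Finset.mem_range] at hk
        show cc k * ENNReal.ofReal ((a k) ^ (-α)) ≤ ENNReal.ofReal ((a k) ^ (-α)) * u s
        rw [mul_comm]
        exact mul_le_mul_right (hccu k s hk.2) _
      refine le_trans (Finset.sum_le_sum hterm) ?_
      rw [← Finset.sum_mul]
      refine mul_le_mul_left ?_ _
      refine le_trans (Finset.sum_le_sum_of_subset (Finset.filter_subset _ _)) ?_
      rw [← ENNReal.ofReal_sum_of_nonneg (fun k _ => Real.rpow_nonneg (ha_pos k).le _)]
      rw [hγ]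
      refine ENNReal.ofReal_le_ofReal ?_
      have hak : ∀ k : ℕ, (a k) ^ (-α) = (2*L)^(-α) * r2 ^ k := by
        intro k
        induction k with
        | zero => rw [ha0, pow_zero, mul_one]
        | succ n ih =>
          rw [ha_succ n, Real.mul_rpow (by norm_num) (ha_pos n).le, ih, hr2, pow_succ]
          ring
      rw [Finset.sum_congr rfl (fun k _ => hak k), ← Finset.mul_sum]
      refine mul_le_mul_of_nonneg_left ?_ (Real.rpow_nonneg (by positivity) _)
      rw [geom_sum_eq (ne_of_lt hr2lt) (T+1)]
      rw [div_le_iff_of_neg (by linarith : r2 - 1 < 0)]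
      have hinv : (1 - r2)⁻¹ * (r2 - 1) = -1 := by
        have hne : (1:ℝ) - r2 ≠ 0 := by linarith
        rw [inv_mul_eq_div, div_eq_iff hne]
        ring
      rw [hinv]
      linarith [pow_nonneg hr2pos.le (T+1)]
    have hXF : X.N F ≤ cF * (4 * X.N u) := by
      have hFup : ∀ s ∈ Ioi (0:ℝ), F s ≤ cF *
          (∑ k ∈ Finset.range (T+1), cc k * (Ioc (0:ℝ) (a (k+2))).indicator 1 s) := by
        intro s hs
        rw [hFeq s hs, Finset.mul_sum]
        refine Finset.sum_le_sum fun k _ => ?_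
        by_cases hsk : s ≤ a (k+2)
        · rw [if_pos hsk, indicator_of_mem (mem_Ioc.mpr ⟨hs, hsk⟩), Pi.one_apply, mul_one, he]
          rw [mul_assoc, ← ENNReal.ofReal_mul (Real.rpow_nonneg (ha_pos k).le _)]
          rw [mul_comm cF (cc k)]
          refine mul_le_mul_right ?_ (cc k)
          rw [hcF]
          refine ENNReal.ofReal_le_ofReal ?_
          have hak : (0:ℝ) < a k := ha_pos k
          have hpow : (0:ℝ) < (a k) ^ α := Real.rpow_pos_of_pos hak α
          have e1 : (a (k+2)) ^ α = 4 ^ α * (a k) ^ α := by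
            rw [show a (k+2) = 4 * a k by rw [ha_succ (k+1), ha_succ k]; ring,
              Real.mul_rpow (by norm_num) hak.le]
          have e3 : (a k) ^ (-α) = ((a k) ^ α)⁻¹ := Real.rpow_neg hak.le α
          have hs0 : (0:ℝ) ≤ s ^ α := Real.rpow_nonneg (le_of_lt hs) α
          rw [e3, e1]
          have hc1 : ((a k)^α)⁻¹ * ((4^α * (a k)^α - s^α)/α) ≤
              ((a k)^α)⁻¹ * ((4^α * (a k)^α)/α) := by
            refine mul_le_mul_of_nonneg_left ?_ (inv_nonneg.mpr hpow.le)
            refine (div_le_div_iff_of_pos_right hα).mpr ?_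
            linarith
          refine le_trans hc1 (le_of_eq ?_)
          field_simp
        · rw [if_neg hsk, indicator_of_notMem (fun hmem => hsk hmem.2), mul_zero]
          exact zero_le
      refine le_trans (X.mono' _ _ hFup) ?_
      refine le_trans (le_of_eq (N_const_mul X cF _)) (mul_le_mul_right ?_ cF)
      refine le_trans (N_quadruple X a (by rw [ha0]; positivity) ha_succ cc (T+1)) ?_
      exact mul_le_mul_right (X.mono' _ _ hΨu) 4
    -- assembly
    have happ := h f hf_anti
    have hcomp : ∀ s ∈ Ioi (0:ℝ), G T s ≤ κ⁻¹ * ((Ioi L).indicator F s) := by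
      intro s hs
      rw [hGdef]
      by_cases hs2 : s ∈ Ioi (2*L)
      · rw [indicator_of_mem hs2]
        have hsL : s ∈ Ioi L := by
          simp only [mem_Ioi] at hs2 ⊢
          linarith
        rw [indicator_of_mem hsL]
        have hlb := hlow s hs2
        calc (if s ≤ a T then u s else 0)
            = κ⁻¹ * (κ * (if s ≤ a T then u s else 0)) := by
              rw [← mul_assoc, ENNReal.inv_mul_cancel hκ0 hκtop, one_mul]
          _ ≤ κ⁻¹ * F s := mul_le_mul_right hlb _
      · rw [indicator_of_notMem hs2]
        exact zero_le
    calc S.N (G T) ≤ S.N (fun s => κ⁻¹ * (Ioi L).indicator F s) := S.mono' _ _ hcomp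
      _ = κ⁻¹ * S.N ((Ioi L).indicator F) := N_const_mul S κ⁻¹ _
      _ ≤ κ⁻¹ * ((C₁:ℝ≥0∞) * (X.N f + X.N F)) := mul_le_mul_right happ _
      _ ≤ κ⁻¹ * ((C₁:ℝ≥0∞) * (4 * (γ * X.N u) + cF * (4 * X.N u))) :=
          mul_le_mul_right (mul_le_mul_right (add_le_add hXf hXF) _) _
      _ = Ctot * X.N u := by
          rw [hCtot, hD]
          ring
  calc S.N ((Ioi (2*L)).indicator u)
      = ⨆ T, S.N (G T) := by rw [hGsup]; exact S.sup' G hGmono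
    _ ≤ Ctot * X.N u := iSup_le main
    _ = (Ctot.toNNReal : ℝ≥0∞) * X.N g := by rw [hXu, ENNReal.coe_toNNReal hCtop]
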